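/- For every nonzero real binary quartic Q there exist M ∈ GL(2,ℝ) and c ∈ ℝ with c ≠ 0 such that c·(Q∘M) is one of the following canonical forms: X⁴ + μX²Y² + Y⁴ for some μ ∈ ℝ; X⁴ + μX²Y² − Y⁴ for some μ ∈ ℝ; X⁴ + X²Y²; X⁴ − X²Y²; X³Y; or X⁴. (This is the canonical-forms proposition: every rotationally symmetric conformal Killing tensor is equivalent under the group action to one of five representative families.) -/

import Mathlib

def quarticEval (a b c d e X Y : ℝ) : ℝ :=
  a * X ^ 4 + b * X ^ 3 * Y + c * X ^ 2 * Y ^ 2 + d * X * Y ^ 3 + e * Y ^ 4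

def Canon (a b c d e : ℝ) : Prop :=
    ∃ α β γ δ c0 : ℝ, α * δ - β * γ ≠ 0 ∧ c0 ≠ 0 ∧
      ((∃ μ : ℝ, ∀ X Y : ℝ,
          c0 * quarticEval a b c d e (α * X + β * Y) (γ * X + δ * Y) =
            X ^ 4 + μ * X ^ 2 * Y ^ 2 + Y ^ 4) ∨
       (∃ μ : ℝ, ∀ X Y : ℝ,
          c0 * quarticEval a b c d e (α * X + β * Y) (γ * X + δ * Y) =
            X ^ 4 + μ * X ^ 2 * Y ^ 2 - Y ^ 4) ∨
       (∀ X Y : ℝ,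
          c0 * quarticEval a b c d e (α * X + β * Y) (γ * X + δ * Y) =
            X ^ 4 + X ^ 2 * Y ^ 2) ∨
       (∀ X Y : ℝ,
          c0 * quarticEval a b c d e (α * X + β * Y) (γ * X + δ * Y) =
            X ^ 4 - X ^ 2 * Y ^ 2) ∨
       (∀ X Y : ℝ,
          c0 * quarticEval a b c d e (α * X + β * Y) (γ * X + δ * Y) =
            X ^ 3 * Y) ∨
       (∀ X Y : ℝ,
          c0 * quarticEval a b c d e (α * X + β * Y) (γ * X + δ * Y) =
            X ^ 4))

lemma canon_ext {a b c d e a' b' c' d' e' : ℝ} (h : Canon a' b' c' d' e')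
    (ha : a = a') (hb : b = b') (hc : c = c') (hd : d = d') (he : e = e') :
    Canon a b c d e := by subst ha hb hc hd he; exact h

lemma transfer {a b c d e a' b' c' d' e' p q r s k : ℝ}
    (hk : k ≠ 0) (hdet : p * s - q * r ≠ 0)
    (h : ∀ u v : ℝ, quarticEval a' b' c' d' e' u v
        = k * quarticEval a b c d e (p * u + q * v) (r * u + s * v))
    (hC : Canon a' b' c' d' e') : Canon a b c d e := by
  obtain ⟨α, β, γ, δ, c0, hd0, hc0, hcase⟩ := hC
  refine ⟨p * α + q * γ, p * β + q * δ, r * α + s * γ, r * β + s * δ, c0 * k, ?_, mul_ne_zero hc0 hk, ?_⟩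
  · have : (p * α + q * γ) * (r * β + s * δ) - (p * β + q * δ) * (r * α + s * γ)
        = (p * s - q * r) * (α * δ - β * γ) := by ring
    rw [this]; exact mul_ne_zero hdet hd0
  · have key : ∀ X Y : ℝ,
        c0 * k * quarticEval a b c d e ((p * α + q * γ) * X + (p * β + q * δ) * Y)
          ((r * α + s * γ) * X + (r * β + s * δ) * Y)
        = c0 * quarticEval a' b' c' d' e' (α * X + β * Y) (γ * X + δ * Y) := by
      intro X Y
      rw [h (α * X + β * Y) (γ * X + δ * Y)]
      ring_nf
    rcases hcase with ⟨μ, h1⟩ | ⟨μ, h1⟩ | h1 | h1 | h1 | h1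
    · exact Or.inl ⟨μ, fun X Y => (key X Y).trans (h1 X Y)⟩
    · exact Or.inr (Or.inl ⟨μ, fun X Y => (key X Y).trans (h1 X Y)⟩)
    · exact Or.inr (Or.inr (Or.inl fun X Y => (key X Y).trans (h1 X Y)))
    · exact Or.inr (Or.inr (Or.inr (Or.inl fun X Y => (key X Y).trans (h1 X Y))))
    · exact Or.inr (Or.inr (Or.inr (Or.inr (Or.inl fun X Y => (key X Y).trans (h1 X Y)))))
    · exact Or.inr (Or.inr (Or.inr (Or.inr (Or.inr fun X Y => (key X Y).trans (h1 X Y)))))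

lemma quarter_pow {k : ℝ} (hk : 0 < k) :
    (1 / Real.sqrt (Real.sqrt k)) ^ 4 = 1 / k := by
  have h1 : 0 < Real.sqrt k := Real.sqrt_pos.2 hk
  have h2 : Real.sqrt (Real.sqrt k) ^ 2 = Real.sqrt k := Real.sq_sqrt h1.le
  have h3 : Real.sqrt k ^ 2 = k := Real.sq_sqrt hk.le
  have h4 : (Real.sqrt (Real.sqrt k)) ^ 4 = k := by
    calc (Real.sqrt (Real.sqrt k)) ^ 4 = (Real.sqrt (Real.sqrt k) ^ 2) ^ 2 := by ring
    _ = k := by rw [h2, h3]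
  rw [div_pow, h4, one_pow]

lemma sqrt_ne_zero'' {k : ℝ} (hk : 0 < k) : Real.sqrt k ≠ 0 :=
  ne_of_gt (Real.sqrt_pos.2 hk)

lemma evenCanon (a c e : ℝ) (ha : a ≠ 0) : Canon a 0 c 0 e := by
  rcases lt_trichotomy (a * e) 0 with hae | hae | hae
  · -- form 2
    have he : e ≠ 0 := by rintro rfl; simp at hae
    have hk : 0 < -(e / a) := by
      rcases lt_or_gt_of_ne ha with h | h
      · have h1 : 0 < e := by nlinarith
        have h2 : e / a < 0 := div_neg_of_pos_of_neg h1 h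
        linarith
      · have h1 : e < 0 := by nlinarith
        have h2 : e / a < 0 := div_neg_of_neg_of_pos h1 h
        linarith
    set s : ℝ := 1 / Real.sqrt (Real.sqrt (-(e / a))) with hs
    have hs0 : s ≠ 0 := one_div_ne_zero (sqrt_ne_zero'' (Real.sqrt_pos.2 hk))
    have hs4 : s ^ 4 = 1 / (-(e / a)) := quarter_pow hk
    have key : e * s ^ 4 = -a := by
      rw [hs4, show -(e / a) = -e / a from by ring, one_div_div, div_neg, mul_neg,
        mul_comm, div_mul_cancel₀ _ he]
    refine ⟨1, 0, 0, s, 1 / a, by simpa using hs0, one_div_ne_zero ha, ?_⟩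
    refine Or.inr (Or.inl ⟨c * s ^ 2 / a, fun X Y => ?_⟩)
    have expand : quarticEval a 0 c 0 e (1 * X + 0 * Y) (0 * X + s * Y)
        = a * X ^ 4 + (c * s ^ 2) * (X ^ 2 * Y ^ 2) + (e * s ^ 4) * Y ^ 4 := by
      simp only [quarticEval]; ring
    rw [expand, key]
    field_simp
    ring
  · -- e = 0
    have he : e = 0 := by
      rcases mul_eq_zero.1 hae with h | h
      · exact absurd h ha
      · exact h
    subst he
    rcases lt_trichotomy (a * c) 0 with hac | hac | hac
    · -- form 4
      have hc : c ≠ 0 := fun h => by rw [h, mul_zero] at hac; exact lt_irrefl 0 hac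
      have hk : 0 < -(c / a) := by
        rcases lt_or_gt_of_ne ha with h | h
        · have h1 : 0 < c := by nlinarith
          have h2 : c / a < 0 := div_neg_of_pos_of_neg h1 h
          linarith
        · have h1 : c < 0 := by nlinarith
          have h2 : c / a < 0 := div_neg_of_neg_of_pos h1 h
          linarith
      set s : ℝ := 1 / Real.sqrt (-(c / a)) with hs
      have hs0 : s ≠ 0 := one_div_ne_zero (sqrt_ne_zero'' hk)
      have hs2 : s ^ 2 = 1 / (-(c / a)) := by
        rw [div_pow, Real.sq_sqrt hk.le, one_pow]
      have key : c * s ^ 2 = -a := by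
        rw [hs2, show -(c / a) = -c / a from by ring, one_div_div, div_neg, mul_neg,
          mul_comm, div_mul_cancel₀ _ hc]
      refine ⟨1, 0, 0, s, 1 / a, by simpa using hs0, one_div_ne_zero ha, ?_⟩
      refine Or.inr (Or.inr (Or.inr (Or.inl fun X Y => ?_)))
      have expand : quarticEval a 0 c 0 0 (1 * X + 0 * Y) (0 * X + s * Y)
          = a * X ^ 4 + (c * s ^ 2) * (X ^ 2 * Y ^ 2) + 0 := by
        simp only [quarticEval]; ring
      rw [expand, key]
      field_simp
      ring
    · -- form 6
      have hc : c = 0 := by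
        rcases mul_eq_zero.1 hac with h | h
        · exact absurd h ha
        · exact h
      subst hc
      refine ⟨1, 0, 0, 1, 1 / a, by norm_num, one_div_ne_zero ha, ?_⟩
      refine Or.inr (Or.inr (Or.inr (Or.inr (Or.inr fun X Y => ?_))))
      simp only [quarticEval]
      field_simp
      ring
    · -- form 3
      have hc : c ≠ 0 := fun h => by rw [h, mul_zero] at hac; exact lt_irrefl 0 hac
      have hk : 0 < c / a := by
        rcases lt_or_gt_of_ne ha with h | h
        · have h1 : c < 0 := by nlinarith
          exact div_pos_of_neg_of_neg h1 h
        · have h1 : 0 < c := by nlinarith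
          exact div_pos h1 h
      set s : ℝ := 1 / Real.sqrt (c / a) with hs
      have hs0 : s ≠ 0 := one_div_ne_zero (sqrt_ne_zero'' hk)
      have hs2 : s ^ 2 = 1 / (c / a) := by
        rw [div_pow, Real.sq_sqrt hk.le, one_pow]
      have key : c * s ^ 2 = a := by
        rw [hs2, one_div_div, mul_comm, div_mul_cancel₀ _ hc]
      refine ⟨1, 0, 0, s, 1 / a, by simpa using hs0, one_div_ne_zero ha, ?_⟩
      refine Or.inr (Or.inr (Or.inl fun X Y => ?_))
      have expand : quarticEval a 0 c 0 0 (1 * X + 0 * Y) (0 * X + s * Y)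
          = a * X ^ 4 + (c * s ^ 2) * (X ^ 2 * Y ^ 2) + 0 := by
        simp only [quarticEval]; ring
      rw [expand, key]
      field_simp
      ring
  · -- form 1
    have he : e ≠ 0 := by rintro rfl; simp at hae
    have hk : 0 < e / a := by
      rcases lt_or_gt_of_ne ha with h | h
      · have h1 : e < 0 := by nlinarith
        exact div_pos_of_neg_of_neg h1 h
      · have h1 : 0 < e := by nlinarith
        exact div_pos h1 h
    set s : ℝ := 1 / Real.sqrt (Real.sqrt (e / a)) with hs
    have hs0 : s ≠ 0 := one_div_ne_zero (sqrt_ne_zero'' (Real.sqrt_pos.2 hk))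
    have hs4 : s ^ 4 = 1 / (e / a) := quarter_pow hk
    have key : e * s ^ 4 = a := by
      rw [hs4, one_div_div, mul_comm, div_mul_cancel₀ _ he]
    refine ⟨1, 0, 0, s, 1 / a, by simpa using hs0, one_div_ne_zero ha, ?_⟩
    refine Or.inl ⟨c * s ^ 2 / a, fun X Y => ?_⟩
    have expand : quarticEval a 0 c 0 e (1 * X + 0 * Y) (0 * X + s * Y)
        = a * X ^ 4 + (c * s ^ 2) * (X ^ 2 * Y ^ 2) + (e * s ^ 4) * Y ^ 4 := by
      simp only [quarticEval]; ring
    rw [expand, key]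
    field_simp

lemma harmonicCanon : Canon 0 1 0 (-1) 0 := by
  set t : ℝ := Real.sqrt 2 with hts
  have ht : t ^ 2 = 2 := Real.sq_sqrt (by norm_num)
  have ht0 : 0 ≤ t := Real.sqrt_nonneg 2
  have ht1 : 1 < t := by nlinarith
  have hD : (2 * (t - 1) ^ 2) ≠ 0 := by
    have h1 : t - 1 ≠ 0 := by intro h0; nlinarith
    exact mul_ne_zero two_ne_zero (pow_ne_zero 2 h1)
  refine ⟨1, -(t - 1), t - 1, 1, 1 / (2 * (t - 1) ^ 2), ?_, one_div_ne_zero hD, ?_⟩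
  · have : (1 : ℝ) * 1 - -(t - 1) * (t - 1) = 1 + (t - 1) ^ 2 := by ring
    rw [this]; positivity
  · refine Or.inl ⟨-6, fun X Y => ?_⟩
    have key : quarticEval 0 1 0 (-1) 0 (1 * X + -(t - 1) * Y) ((t - 1) * X + 1 * Y)
        = 2 * (t - 1) ^ 2 * (X ^ 4 + (-6) * X ^ 2 * Y ^ 2 + Y ^ 4) := by
      simp only [quarticEval]
      linear_combination (Y ^ 4 - 2 * X * Y ^ 3 - 6 * X ^ 2 * Y ^ 2 + 2 * X ^ 3 * Y + X ^ 4
        + t * (-Y ^ 4 + 4 * X * Y ^ 3 + 6 * X ^ 2 * Y ^ 2 - 4 * X ^ 3 * Y - X ^ 4)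
        + t ^ 2 * (-(X * Y ^ 3) + X ^ 3 * Y)) * ht
    rw [key, ← mul_assoc, one_div_mul_cancel hD, one_mul]

lemma wFamilyNeg (w : ℝ) (hw : w < 0) : Canon 1 (-w) (-1) w 0 := by
  have hH : (0:ℝ) < 2 * w ^ 2 - 2 * w := by nlinarith
  set h : ℝ := Real.sqrt (2 * w ^ 2 - 2 * w) with hhs
  have hh : h ^ 2 = 2 * w ^ 2 - 2 * w := Real.sq_sqrt hH.le
  have hpos : 0 < h := Real.sqrt_pos.2 hH
  have h2w : (0:ℝ) < 2 - w := by linarith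
  -- factors of aF
  have hF1 : w + h ≠ 0 := by
    intro heq
    have : h = -w := by linarith
    nlinarith [sq_nonneg w]
  have hF2 : (0:ℝ) < h + w ^ 2 - w := by nlinarith
  have hF3 : h + 2 * w - 2 ≠ 0 := by
    intro heq
    have : h = 2 - 2 * w := by linarith
    nlinarith
  have hF4 : (0:ℝ) < h + 2 := by linarith
  set aF : ℝ := (w + h) * (h + w ^ 2 - w) * (h + 2 * w - 2) * (h + 2) with haFs
  set cF : ℝ := -12 * w ^ 5 + 64 * w ^ 4 - 116 * w ^ 3 + 80 * w ^ 2 - 16 * w with hcFs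
  set eF : ℝ := (w - h) * (w ^ 2 - w - h) * (2 * w - 2 - h) * (2 - h) with heFs
  have haF : aF ≠ 0 := by
    apply mul_ne_zero (mul_ne_zero (mul_ne_zero hF1 (ne_of_gt hF2)) hF3) (ne_of_gt hF4)
  refine transfer (a' := aF) (b' := 0) (c' := cF) (d' := 0) (e' := eF)
      (p := w + h) (q := w - h) (r := 2 - w) (s := 2 - w) (k := 1)
      one_ne_zero ?_ ?_ (evenCanon aF cF eF haF)
  · have : (w + h) * (2 - w) - (w - h) * (2 - w) = 2 * h * (2 - w) := by ring
    rw [this]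
    positivity
  · intro u v
    simp only [quarticEval, haFs, hcFs, heFs]
    linear_combination (-(8 * u ^ 2 * v ^ 2 + h ^ 2 * (-4 * u * v ^ 3 + 6 * u ^ 2 * v ^ 2 - 4 * u ^ 3 * v)
      + w * (8 * u * v ^ 3 - 20 * u ^ 2 * v ^ 2 + 8 * u ^ 3 * v)
      + w * h * (4 * u * v ^ 3 - 4 * u ^ 3 * v)
      + w ^ 2 * (-8 * u * v ^ 3 + 14 * u ^ 2 * v ^ 2 - 8 * u ^ 3 * v)
      + w ^ 2 * h * (2 * u * v ^ 3 - 2 * u ^ 3 * v)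
      + w ^ 3 * (-6 * u ^ 2 * v ^ 2))) * hh

lemma wFamily (w : ℝ) (hw : w ≠ 0) : Canon 1 (-w) (-1) w 0 := by
  rcases lt_or_gt_of_ne hw with h | h
  · exact wFamilyNeg w h
  · refine transfer (a' := 1) (b' := -(-w)) (c' := -1) (d' := -w) (e' := 0)
        (p := 1) (q := 0) (r := 0) (s := -1) (k := 1) one_ne_zero (by norm_num) ?_
        (wFamilyNeg (-w) (by linarith))
    intro u v
    simp only [quarticEval]
    ring

lemma scale_cancel {D E F : ℝ} (hD : D ≠ 0) (h : E = D * F) : 1 / D * E = F := by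
  rw [h, ← mul_assoc, one_div_mul_cancel hD, one_mul]

lemma P4 (x : ℝ) : Canon 1 (-(4 * x)) (6 * x ^ 2) (-(4 * x ^ 3)) (x ^ 4) := by
  refine ⟨1, x, 0, 1, 1, by norm_num, one_ne_zero, ?_⟩
  refine Or.inr (Or.inr (Or.inr (Or.inr (Or.inr fun X Y => ?_))))
  simp only [quarticEval]; ring

lemma P31 (x y : ℝ) (hxy : x ≠ y) :
    Canon 1 (-(3 * x + y)) (3 * x ^ 2 + 3 * x * y) (-(x ^ 3 + 3 * x ^ 2 * y)) (x ^ 3 * y) := by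
  have hD : -(y - x) ^ 4 ≠ 0 := by
    have : y - x ≠ 0 := sub_ne_zero.2 (Ne.symm hxy)
    simpa using pow_ne_zero 4 this
  refine ⟨y, x, 1, 1, 1 / (-(y - x) ^ 4), by simpa [sub_ne_zero] using sub_ne_zero.2 (Ne.symm hxy), one_div_ne_zero hD, ?_⟩
  refine Or.inr (Or.inr (Or.inr (Or.inr (Or.inl fun X Y => ?_))))
  refine scale_cancel hD ?_
  simp only [quarticEval]; ring

lemma P22 (x y : ℝ) (hxy : x ≠ y) :
    Canon 1 (-(2 * x + 2 * y)) (x ^ 2 + 4 * x * y + y ^ 2)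
      (-(2 * x ^ 2 * y + 2 * x * y ^ 2)) (x ^ 2 * y ^ 2) := by
  have hyx : y - x ≠ 0 := sub_ne_zero.2 (Ne.symm hxy)
  refine ⟨1, 1 + x * (2 / (y - x)), 0, 2 / (y - x), 1, ?_, one_ne_zero, ?_⟩
  · have : (1 : ℝ) * (2 / (y - x)) - (1 + x * (2 / (y - x))) * 0 = 2 / (y - x) := by ring
    rw [this]
    exact div_ne_zero two_ne_zero hyx
  · refine Or.inl ⟨-2, fun X Y => ?_⟩
    simp only [quarticEval]
    field_simp
    ring

lemma P211 (x y z : ℝ) (hxy : x ≠ y) (hxz : x ≠ z) (hyz : y ≠ z) :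
    Canon 1 (-(2 * x + y + z)) (x ^ 2 + 2 * x * y + 2 * x * z + y * z)
      (-(x ^ 2 * y + x ^ 2 * z + 2 * x * y * z)) (x ^ 2 * y * z) := by
  have hxy' : x - y ≠ 0 := sub_ne_zero.2 hxy
  have hxz' : x - z ≠ 0 := sub_ne_zero.2 hxz
  have hyz' : y - z ≠ 0 := sub_ne_zero.2 hyz
  set k : ℝ := -2 * (x - y) * (x - z) with hk
  set m : ℝ := (y - x) * (y - z) with hm
  set n : ℝ := (z - x) * (z - y) with hn
  have hk0 : k ≠ 0 := by
    apply mul_ne_zero (mul_ne_zero (by norm_num) hxy') hxz'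
  have hm0 : m ≠ 0 := mul_ne_zero (sub_ne_zero.2 (Ne.symm hxy)) hyz'
  have hn0 : n ≠ 0 := mul_ne_zero (sub_ne_zero.2 (Ne.symm hxz)) (sub_ne_zero.2 (Ne.symm hyz))
  have hD : k ^ 2 * m * n ≠ 0 := mul_ne_zero (mul_ne_zero (pow_ne_zero 2 hk0) hm0) hn0
  refine ⟨x * y + x * z - 2 * y * z, x * (y - z), 2 * x - y - z, y - z,
    1 / (k ^ 2 * m * n), ?_, one_div_ne_zero hD, ?_⟩
  · have : (x * y + x * z - 2 * y * z) * (y - z) - x * (y - z) * (2 * x - y - z)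
        = -2 * (y - z) * (x - y) * (x - z) := by ring
    rw [this]
    exact mul_ne_zero (mul_ne_zero (mul_ne_zero (by norm_num) hyz') hxy') hxz'
  · refine Or.inr (Or.inr (Or.inr (Or.inl fun X Y => ?_)))
    refine scale_cancel hD ?_
    simp only [quarticEval, hk, hm, hn]
    ring

lemma P1111 (x y z t : ℝ) (hxy : x ≠ y) (hxz : x ≠ z) (hxt : x ≠ t) (hzt : z ≠ t) :
    Canon 1 (-(x + y + z + t)) (x * y + x * z + x * t + y * z + y * t + z * t)
      (-(x * y * z + x * y * t + x * z * t + y * z * t)) (x * y * z * t) := by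
  have hxz' : x - z ≠ 0 := sub_ne_zero.2 hxz
  have hxt' : x - t ≠ 0 := sub_ne_zero.2 hxt
  have hzt' : z - t ≠ 0 := sub_ne_zero.2 hzt
  have hxy' : x - y ≠ 0 := sub_ne_zero.2 hxy
  set p : ℝ := x * (z + t) - 2 * z * t with hp
  set q : ℝ := x * (z - t) with hq
  set r : ℝ := 2 * x - z - t with hr
  set s : ℝ := z - t with hs
  set k : ℝ := -2 * (x - z) * (x - t) with hk
  set m : ℝ := (z - x) * (z - t) with hm
  set n : ℝ := (t - x) * (t - z) with hn
  set A : ℝ := p - y * r with hA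
  set B : ℝ := (x - y) * (z - t) with hB
  have hk0 : k ≠ 0 := mul_ne_zero (mul_ne_zero (by norm_num) hxz') hxt'
  have hm0 : m ≠ 0 := mul_ne_zero (sub_ne_zero.2 (Ne.symm hxz)) hzt'
  have hn0 : n ≠ 0 := mul_ne_zero (sub_ne_zero.2 (Ne.symm hxt)) (sub_ne_zero.2 (Ne.symm hzt))
  have hB0 : B ≠ 0 := mul_ne_zero hxy' hzt'
  have hdet : p * s - q * r ≠ 0 := by
    have : p * s - q * r = -2 * (z - t) * (x - z) * (x - t) := by rw [hp, hq, hr, hs]; ring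
    rw [this]
    exact mul_ne_zero (mul_ne_zero (mul_ne_zero (by norm_num) hzt') hxz') hxt'
  have I1 : ∀ u v : ℝ,
      quarticEval 1 (-(x + y + z + t)) (x * y + x * z + x * t + y * z + y * t + z * t)
        (-(x * y * z + x * y * t + x * z * t + y * z * t)) (x * y * z * t)
        (p * u + q * v) (r * u + s * v)
      = (k * u) * (m * (u - v)) * (n * (u + v)) * (A * u + B * v) := by
    intro u v
    simp only [quarticEval, hp, hq, hr, hs, hk, hm, hn, hA, hB]
    ring
  by_cases hA0 : A = 0
  · -- harmonic case
    refine transfer (a' := 0) (b' := 1) (c' := 0) (d' := -1) (e' := 0)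
        (p := p) (q := q) (r := r) (s := s) (k := 1 / (k * m * n * B))
        (one_div_ne_zero (mul_ne_zero (mul_ne_zero (mul_ne_zero hk0 hm0) hn0) hB0))
        hdet ?_ harmonicCanon
    intro u v
    rw [I1 u v, hA0]
    simp only [quarticEval]
    field_simp
    ring
  · -- wFamily case
    have hw : -B / A ≠ 0 := div_ne_zero (neg_ne_zero.2 hB0) hA0
    refine transfer (a' := 1) (b' := -(-B / A)) (c' := -1) (d' := -B / A) (e' := 0)
        (p := p) (q := q) (r := r) (s := s) (k := 1 / (k * m * n * A))
        (one_div_ne_zero (mul_ne_zero (mul_ne_zero (mul_ne_zero hk0 hm0) hn0) hA0))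
        hdet ?_ (wFamily (-B / A) hw)
    intro u v
    rw [I1 u v]
    simp only [quarticEval]
    field_simp
    ring

lemma fourRoots (x1 x2 x3 x4 : ℝ) :
    Canon 1 (-(x1 + x2 + x3 + x4))
      (x1 * x2 + x1 * x3 + x1 * x4 + x2 * x3 + x2 * x4 + x3 * x4)
      (-(x1 * x2 * x3 + x1 * x2 * x4 + x1 * x3 * x4 + x2 * x3 * x4))
      (x1 * x2 * x3 * x4) := by
  rcases eq_or_ne x1 x2 with rfl | h12
  · rcases eq_or_ne x3 x4 with rfl | h34
    · rcases eq_or_ne x1 x3 with rfl | h13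
      · exact canon_ext (P4 x1) rfl (by ring) (by ring) (by ring) (by ring)
      · exact canon_ext (P22 x1 x3 h13) rfl (by ring) (by ring) (by ring) (by ring)
    · rcases eq_or_ne x1 x3 with rfl | h13
      · exact canon_ext (P31 x1 x4 h34) rfl (by ring) (by ring) (by ring) (by ring)
      · rcases eq_or_ne x1 x4 with rfl | h14
        · exact canon_ext (P31 x1 x3 h13) rfl (by ring) (by ring) (by ring) (by ring)
        · exact canon_ext (P211 x1 x3 x4 h13 h14 h34) rfl (by ring) (by ring) (by ring) (by ring)
  · rcases eq_or_ne x1 x3 with rfl | h13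
    · rcases eq_or_ne x1 x4 with rfl | h14
      · exact canon_ext (P31 x1 x2 h12) rfl (by ring) (by ring) (by ring) (by ring)
      · rcases eq_or_ne x2 x4 with rfl | h24
        · exact canon_ext (P22 x1 x2 h12) rfl (by ring) (by ring) (by ring) (by ring)
        · exact canon_ext (P211 x1 x2 x4 h12 h14 h24) rfl (by ring) (by ring) (by ring) (by ring)
    · rcases eq_or_ne x1 x4 with rfl | h14
      · rcases eq_or_ne x2 x3 with rfl | h23
        · exact canon_ext (P22 x1 x2 h12) rfl (by ring) (by ring) (by ring) (by ring)
        · exact canon_ext (P211 x1 x2 x3 h12 h13 h23) rfl (by ring) (by ring) (by ring) (by ring)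
      · rcases eq_or_ne x2 x3 with rfl | h23
        · rcases eq_or_ne x2 x4 with rfl | h24
          · exact canon_ext (P31 x2 x1 h12.symm) rfl (by ring) (by ring) (by ring) (by ring)
          · exact canon_ext (P211 x2 x1 x4 h12.symm h24 h14) rfl (by ring) (by ring) (by ring) (by ring)
        · rcases eq_or_ne x2 x4 with rfl | h24
          · exact canon_ext (P211 x2 x1 x3 h12.symm h23 h13) rfl (by ring) (by ring) (by ring) (by ring)
          · rcases eq_or_ne x3 x4 with rfl | h34
            · exact canon_ext (P211 x3 x1 x2 h13.symm h23.symm h12) rfl (by ring) (by ring) (by ring) (by ring)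
            · exact P1111 x1 x2 x3 x4 h12 h13 h14 h34

lemma sqRep (A B C : ℝ) (hd : B ^ 2 = 4 * A * C) (hne : ¬(A = 0 ∧ B = 0 ∧ C = 0)) :
    ∃ σ u v : ℝ, σ ≠ 0 ∧ ∀ X Y : ℝ, A * X ^ 2 + B * X * Y + C * Y ^ 2 = σ * (u * X + v * Y) ^ 2 := by
  by_cases hA : A = 0
  · have hB : B = 0 := by
      have : B ^ 2 = 0 := by rw [hd, hA]; ring
      exact pow_eq_zero_iff (n := 2) (by norm_num) |>.1 this
    have hC : C ≠ 0 := fun hC => hne ⟨hA, hB, hC⟩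
    exact ⟨C, 0, 1, hC, fun X Y => by rw [hA, hB]; ring⟩
  · refine ⟨1 / (4 * A), 2 * A, B, one_div_ne_zero (by simpa using hA), fun X Y => ?_⟩
    rw [eq_comm, div_mul_eq_mul_div, div_eq_iff (by simpa using hA : (4:ℝ) * A ≠ 0)]
    linear_combination Y ^ 2 * hd

lemma diagPair (a1 b1 c1 a2 b2 c2 : ℝ)
    (h2 : b2 ^ 2 - 4 * a2 * c2 < 0)
    (hD : 0 < (b1 - b2) ^ 2 - 4 * (a1 - a2) * (c1 - c2)) :
    Canon (a1 * a2) (a1 * b2 + b1 * a2) (a1 * c2 + b1 * b2 + c1 * a2)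
      (b1 * c2 + c1 * b2) (c1 * c2) := by
  set L : ℝ := 4 * a2 * c2 - b2 ^ 2 with hLs
  have hL : 0 < L := by simp only [hLs]; linarith
  set M : ℝ := 2 * b1 * b2 - 4 * (a1 * c2 + c1 * a2) with hMs
  set N : ℝ := 4 * a1 * c1 - b1 ^ 2 with hNs
  set g : ℝ → ℝ := fun l => L * l ^ 2 + M * l + N with hgs
  have hcont : Continuous g := by
    simp only [hgs]; continuity
  have hg1 : g 1 < 0 := by
    have h : g 1 = -((b1 - b2) ^ 2 - 4 * (a1 - a2) * (c1 - c2)) := by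
      simp only [hgs, hLs, hMs, hNs]; ring
    rw [h]; linarith
  set T : ℝ := (|M| + |N| + L) / L + 1 with hTs
  have hT1 : 1 ≤ T := by
    have h1 : 0 ≤ (|M| + |N| + L) / L := by positivity
    simp only [hTs]; linarith
  have hT0 : 0 ≤ T := by linarith
  have hLT : L * T = |M| + |N| + L + L := by
    simp only [hTs]
    field_simp
  have hMM : 0 ≤ |M| + M := by linarith [neg_abs_le M]
  have hMM' : 0 ≤ |M| - M := by linarith [le_abs_self M]
  have hNN : 0 ≤ |N| + N := by linarith [neg_abs_le N]
  have hLT2 : L * T ^ 2 = T * (|M| + |N| + L + L) := by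
    rw [show L * T ^ 2 = T * (L * T) by ring, hLT]
  have hgT : 0 < g T := by
    simp only [hgs]
    nlinarith [mul_nonneg hT0 hMM, mul_nonneg (by linarith : (0:ℝ) ≤ T - 1) (abs_nonneg N),
      mul_nonneg (by linarith : (0:ℝ) ≤ T - 1) hL.le]
  have hgmT : 0 < g (-T) := by
    simp only [hgs]
    nlinarith [mul_nonneg hT0 hMM', mul_nonneg (by linarith : (0:ℝ) ≤ T - 1) (abs_nonneg N),
      mul_nonneg (by linarith : (0:ℝ) ≤ T - 1) hL.le]
  obtain ⟨l1, hl1mem, hl1⟩ := intermediate_value_Icc' (by linarith : -T ≤ 1)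
    hcont.continuousOn ⟨hg1.le, hgmT.le⟩
  obtain ⟨l2, hl2mem, hl2⟩ := intermediate_value_Icc (by linarith : (1:ℝ) ≤ T)
    hcont.continuousOn ⟨hg1.le, hgT.le⟩
  have hl1lt : l1 < 1 := by
    rcases lt_or_eq_of_le hl1mem.2 with h | h
    · exact h
    · exfalso; rw [h] at hl1; rw [hl1] at hg1; exact lt_irrefl 0 hg1
  have hl2gt : 1 < l2 := by
    rcases lt_or_eq_of_le hl2mem.1 with h | h
    · exact h
    · exfalso; rw [← h] at hl2; rw [hl2] at hg1; exact lt_irrefl 0 hg1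
  have hgeq : ∀ l : ℝ, g l = 0 → (b1 - l * b2) ^ 2 = 4 * (a1 - l * a2) * (c1 - l * c2) := by
    intro l hl
    have : L * l ^ 2 + M * l + N = 0 := hl
    simp only [hLs, hMs, hNs] at this
    linear_combination -this
  have hSne : ∀ l : ℝ, ¬(a1 - l * a2 = 0 ∧ b1 - l * b2 = 0 ∧ c1 - l * c2 = 0) := by
    rintro l ⟨hA, hB, hC⟩
    have ha1 : a1 = l * a2 := by linarith
    have hb1 : b1 = l * b2 := by linarith
    have hc1 : c1 = l * c2 := by linarith
    rw [ha1, hb1, hc1] at hD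
    have key : (l * b2 - b2) ^ 2 - 4 * (l * a2 - a2) * (l * c2 - c2)
        = (l - 1) ^ 2 * (b2 ^ 2 - 4 * a2 * c2) := by ring
    rw [key] at hD
    have : (l - 1) ^ 2 * (b2 ^ 2 - 4 * a2 * c2) ≤ 0 :=
      mul_nonpos_of_nonneg_of_nonpos (sq_nonneg _) h2.le
    linarith
  obtain ⟨σ1, u1, v1, hσ1, hid1⟩ := sqRep _ _ _ (hgeq l1 hl1) (hSne l1)
  obtain ⟨σ2, u2, v2, hσ2, hid2⟩ := sqRep _ _ _ (hgeq l2 hl2) (hSne l2)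
  -- coefficient extraction
  have e1a : a1 - l1 * a2 = σ1 * u1 ^ 2 := by linear_combination hid1 1 0
  have e1c : c1 - l1 * c2 = σ1 * v1 ^ 2 := by linear_combination hid1 0 1
  have e1b : b1 - l1 * b2 = 2 * σ1 * u1 * v1 := by
    linear_combination hid1 1 1 - hid1 1 0 - hid1 0 1
  have e2a : a1 - l2 * a2 = σ2 * u2 ^ 2 := by linear_combination hid2 1 0
  have e2c : c1 - l2 * c2 = σ2 * v2 ^ 2 := by linear_combination hid2 0 1
  have e2b : b1 - l2 * b2 = 2 * σ2 * u2 * v2 := by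
    linear_combination hid2 1 1 - hid2 1 0 - hid2 0 1
  set Δ : ℝ := u1 * v2 - u2 * v1 with hΔs
  have hdisc2 : (l2 - l1) ^ 2 * (b2 ^ 2 - 4 * a2 * c2) = 4 * (σ1 * σ2) * Δ ^ 2 := by
    simp only [hΔs]
    linear_combination ((l2 - l1) * b2 + 2 * σ1 * u1 * v1 - 2 * σ2 * u2 * v2) * e1b
      - ((l2 - l1) * b2 + 2 * σ1 * u1 * v1 - 2 * σ2 * u2 * v2) * e2b
      - 4 * (l2 - l1) * a2 * e1c + 4 * (l2 - l1) * a2 * e2c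
      - 4 * (σ1 * v1 ^ 2 - σ2 * v2 ^ 2) * e1a + 4 * (σ1 * v1 ^ 2 - σ2 * v2 ^ 2) * e2a
  have hl12 : l1 < l2 := lt_trans hl1lt hl2gt
  have hD21 : (0:ℝ) < l2 - l1 := by linarith
  have hΔne : Δ ≠ 0 := by
    intro h
    rw [h] at hdisc2
    have h0 : (l2 - l1) ^ 2 * (b2 ^ 2 - 4 * a2 * c2) = 0 := by rw [hdisc2]; ring
    have h1 : (l2 - l1) ^ 2 * (b2 ^ 2 - 4 * a2 * c2) < 0 :=
      mul_neg_of_pos_of_neg (pow_pos hD21 2) h2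
    linarith
  set D : ℝ := l2 - l1 with hDs
  have hD0 : D ≠ 0 := ne_of_gt hD21
  set G : ℝ := Δ ^ 2 / D with hGs
  have hG0 : G ≠ 0 := div_ne_zero (pow_ne_zero 2 hΔne) hD0
  refine transfer (a' := l2 * σ1 ^ 2 * G ^ 2) (b' := 0)
      (c' := -(l1 + l2) * (σ1 * σ2) * G ^ 2) (d' := 0) (e' := l1 * σ2 ^ 2 * G ^ 2)
      (p := v2) (q := -v1) (r := -u2) (s := u1) (k := 1)
      one_ne_zero ?_ ?_ (evenCanon _ _ _ ?_)
  · have : v2 * u1 - -v1 * -u2 = Δ := by simp only [hΔs]; ring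
    rw [this]; exact hΔne
  · intro u v
    set x0 : ℝ := v2 * u + -v1 * v with hx0
    set y0 : ℝ := -u2 * u + u1 * v with hy0
    have w1 := hid1 x0 y0
    have w2 := hid2 x0 y0
    have hQ2v : a2 * x0 ^ 2 + b2 * x0 * y0 + c2 * y0 ^ 2
        = (σ1 * Δ ^ 2 * u ^ 2 - σ2 * Δ ^ 2 * v ^ 2) / D := by
      rw [eq_div_iff hD0]
      simp only [hx0, hy0, hΔs, hDs] at w1 w2 ⊢
      linear_combination w1 - w2
    have hQ1v : a1 * x0 ^ 2 + b1 * x0 * y0 + c1 * y0 ^ 2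
        = (l2 * σ1 * Δ ^ 2 * u ^ 2 - l1 * σ2 * Δ ^ 2 * v ^ 2) / D := by
      rw [eq_div_iff hD0]
      simp only [hx0, hy0, hΔs, hDs] at w1 w2 ⊢
      linear_combination l2 * w1 - l1 * w2
    have hprod : quarticEval (a1 * a2) (a1 * b2 + b1 * a2) (a1 * c2 + b1 * b2 + c1 * a2)
        (b1 * c2 + c1 * b2) (c1 * c2) x0 y0
        = (a1 * x0 ^ 2 + b1 * x0 * y0 + c1 * y0 ^ 2)
          * (a2 * x0 ^ 2 + b2 * x0 * y0 + c2 * y0 ^ 2) := by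
      simp only [quarticEval]; ring
    rw [hprod, hQ1v, hQ2v]
    simp only [quarticEval, hGs]
    field_simp
    ring
  · have hl2' : l2 ≠ 0 := by intro h; rw [h] at hl2gt; exact absurd hl2gt (by norm_num)
    exact mul_ne_zero (mul_ne_zero hl2' (pow_ne_zero 2 hσ1)) (pow_ne_zero 2 hG0)

lemma monicCanon (c d e : ℝ) : Canon 1 0 c d e := by
  by_cases hd : d = 0
  · subst hd; exact evenCanon 1 c e one_ne_zero
  · -- resolvent cubic
    set f : ℝ → ℝ := fun z => z ^ 3 + 2 * c * z ^ 2 + (c ^ 2 - 4 * e) * z - d ^ 2 with hfs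
    have hcont : Continuous f := by simp only [hfs]; continuity
    have hd2 : 0 < d ^ 2 := by positivity
    have hf0 : f 0 < 0 := by simp only [hfs]; simpa using hd2
    set M0 : ℝ := 1 + |2 * c| + |c ^ 2 - 4 * e| + d ^ 2 with hM0s
    have hM1 : 1 ≤ M0 := by
      have := abs_nonneg (2 * c); have := abs_nonneg (c ^ 2 - 4 * e)
      simp only [hM0s]; linarith
    have hfM : 0 < f M0 := by
      simp only [hfs]
      have ha1 : -|2 * c| ≤ 2 * c := neg_abs_le _
      have ha2 : -|c ^ 2 - 4 * e| ≤ c ^ 2 - 4 * e := neg_abs_le _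
      have hM0 : 0 ≤ M0 := by linarith
      have hcube : M0 ^ 3 = M0 ^ 2 * (1 + |2 * c| + |c ^ 2 - 4 * e| + d ^ 2) := by
        rw [hM0s]; ring
      nlinarith [mul_le_mul_of_nonneg_left ha1 (sq_nonneg M0),
        mul_le_mul_of_nonneg_left ha2 hM0,
        mul_nonneg (abs_nonneg (c ^ 2 - 4 * e)) (mul_nonneg hM0 (by linarith : (0:ℝ) ≤ M0 - 1)),
        mul_nonneg (sq_nonneg d) (by nlinarith : (0:ℝ) ≤ M0 ^ 2 - 1),
        sq_nonneg M0, mul_le_mul_of_nonneg_left hM1 (mul_nonneg hM0 hM0)]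
    obtain ⟨z, hzmem, hfz⟩ := intermediate_value_Icc (by linarith : (0:ℝ) ≤ M0)
      hcont.continuousOn ⟨hf0.le, hfM.le⟩
    have hz0 : 0 < z := by
      rcases lt_or_eq_of_le hzmem.1 with h | h
      · exact h
      · exfalso; rw [← h] at hfz; rw [hfz] at hf0; exact lt_irrefl 0 hf0
    have hfz' : z ^ 3 + 2 * c * z ^ 2 + (c ^ 2 - 4 * e) * z - d ^ 2 = 0 := hfz
    set p : ℝ := Real.sqrt z with hps
    have hp2 : p ^ 2 = z := Real.sq_sqrt hz0.le
    have hp : 0 < p := Real.sqrt_pos.2 hz0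
    have hp0 : p ≠ 0 := ne_of_gt hp
    set q1 : ℝ := (c + z - d / p) / 2 with hq1s
    set q2 : ℝ := (c + z + d / p) / 2 with hq2s
    have hcc : c = 1 * q2 + p * (-p) + q1 * 1 := by
      simp only [hq1s, hq2s]
      field_simp
      linear_combination (2 * p) * hp2
    have hdd : d = p * q2 + q1 * (-p) := by
      simp only [hq1s, hq2s]
      field_simp
      ring
    have hee : e = q1 * q2 := by
      have hdp : (d / p) ^ 2 = d ^ 2 / z := by rw [div_pow, hp2]
      have h1 : q1 * q2 = ((c + z) ^ 2 - (d / p) ^ 2) / 4 := by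
        simp only [hq1s, hq2s]; ring
      rw [h1, hdp]
      field_simp
      linear_combination -hfz'
    by_cases hD2 : (-p) ^ 2 - 4 * 1 * q2 < 0
    · exact canon_ext (diagPair 1 p q1 1 (-p) q2 hD2
        (by nlinarith : 0 < (p - -p) ^ 2 - 4 * (1 - 1) * (q1 - q2)))
        (by norm_num) (by ring) hcc hdd hee
    · by_cases hD1 : p ^ 2 - 4 * 1 * q1 < 0
      · exact canon_ext (diagPair 1 (-p) q2 1 p q1 hD1
          (by nlinarith : 0 < (-p - p) ^ 2 - 4 * (1 - 1) * (q2 - q1)))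
          (by norm_num) (by ring) (by linear_combination hcc) (by linear_combination hdd)
          (by linear_combination hee)
      · push_neg at hD1 hD2
        set s1 : ℝ := Real.sqrt (p ^ 2 - 4 * q1) with hs1s
        set s2 : ℝ := Real.sqrt (p ^ 2 - 4 * q2) with hs2s
        have hs1 : s1 ^ 2 = p ^ 2 - 4 * q1 := Real.sq_sqrt (by linarith)
        have hs2 : s2 ^ 2 = p ^ 2 - 4 * q2 := Real.sq_sqrt (by nlinarith)
        refine canon_ext (fourRoots ((-p + s1) / 2) ((-p - s1) / 2) ((p + s2) / 2) ((p - s2) / 2))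
          rfl (by ring) ?_ ?_ ?_
        · linear_combination hcc + (1 / 4) * hs1 + (1 / 4) * hs2
        · linear_combination hdd - (p / 4) * hs1 + (p / 4) * hs2
        · linear_combination hee + (q2 / 4) * hs1
            + (q1 / 4 - (s1 ^ 2 - p ^ 2 + 4 * q1) / 16) * hs2

lemma canonA (a b c d e : ℝ) (ha : a ≠ 0) : Canon a b c d e := by
  refine transfer (a' := 1) (b' := 0)
      (c' := (6 * a * (-b / (4 * a)) ^ 2 + 3 * b * (-b / (4 * a)) + c) / a)
      (d' := (4 * a * (-b / (4 * a)) ^ 3 + 3 * b * (-b / (4 * a)) ^ 2 + 2 * c * (-b / (4 * a)) + d) / a)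
      (e' := (a * (-b / (4 * a)) ^ 4 + b * (-b / (4 * a)) ^ 3 + c * (-b / (4 * a)) ^ 2
        + d * (-b / (4 * a)) + e) / a)
      (p := 1) (q := -b / (4 * a)) (r := 0) (s := 1) (k := 1 / a)
      (one_div_ne_zero ha) (by norm_num) ?_ (monicCanon _ _ _)
  intro u v
  simp only [quarticEval]
  field_simp
  ring

theorem quartic_canonical_forms
    (a b c d e : ℝ) (hQ : ¬(a = 0 ∧ b = 0 ∧ c = 0 ∧ d = 0 ∧ e = 0)) :
    ∃ α β γ δ c0 : ℝ, α * δ - β * γ ≠ 0 ∧ c0 ≠ 0 ∧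
      ((∃ μ : ℝ, ∀ X Y : ℝ,
          c0 * quarticEval a b c d e (α * X + β * Y) (γ * X + δ * Y) =
            X ^ 4 + μ * X ^ 2 * Y ^ 2 + Y ^ 4) ∨
       (∃ μ : ℝ, ∀ X Y : ℝ,
          c0 * quarticEval a b c d e (α * X + β * Y) (γ * X + δ * Y) =
            X ^ 4 + μ * X ^ 2 * Y ^ 2 - Y ^ 4) ∨
       (∀ X Y : ℝ,
          c0 * quarticEval a b c d e (α * X + β * Y) (γ * X + δ * Y) =
            X ^ 4 + X ^ 2 * Y ^ 2) ∨
       (∀ X Y : ℝ,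
          c0 * quarticEval a b c d e (α * X + β * Y) (γ * X + δ * Y) =
            X ^ 4 - X ^ 2 * Y ^ 2) ∨
       (∀ X Y : ℝ,
          c0 * quarticEval a b c d e (α * X + β * Y) (γ * X + δ * Y) =
            X ^ 3 * Y) ∨
       (∀ X Y : ℝ,
          c0 * quarticEval a b c d e (α * X + β * Y) (γ * X + δ * Y) =
            X ^ 4)) := by
  show Canon a b c d e
  by_cases ha : a ≠ 0
  · exact canonA a b c d e ha
  · push_neg at ha
    subst ha
    have hex : ∃ t0 : ℝ, quarticEval 0 b c d e t0 1 ≠ 0 := by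
      by_contra hcon
      push_neg at hcon
      have h0 := hcon 0
      have h1 := hcon 1
      have hm1 := hcon (-1)
      have h2 := hcon 2
      simp only [quarticEval] at h0 h1 hm1 h2
      norm_num at h0 h1 hm1 h2
      exact hQ ⟨rfl, by linarith, by linarith, by linarith, by linarith⟩
    obtain ⟨t0, ht0⟩ := hex
    refine transfer (a' := quarticEval 0 b c d e t0 1)
        (b' := 3 * b * t0 ^ 2 + 2 * c * t0 + d)
        (c' := 3 * b * t0 + c) (d' := b) (e' := 0)
        (p := t0) (q := 1) (r := 1) (s := 0) (k := 1)
        one_ne_zero (by norm_num) ?_ (canonA _ _ _ _ _ ht0)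
    intro u v
    simp only [quarticEval]
    ring
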